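/- Let L be a field of prime characteristic p and R = L[y_1, …, y_n] the polynomial ring in n variables over L. Then for every integer m > 0, R is flat as an R-module via restriction of scalars along f^m, where f : R → R is the Frobenius endomorphism (f(a) = a^p) and f^m is its m-fold composite. -/

import Mathlib

open MvPolynomial


/-- `FrobIter R p n` is the ring `R` regarded as a module over itself by restriction of
scalars along the `n`-fold composite `f^n : a ↦ a ^ (p ^ n)` of the Frobenius endomorphism
`f : a ↦ a ^ p`, i.e. `r • m = r ^ (p ^ n) * m`. -/
def FrobIter (R : Type*) [CommRing R] (p n : ℕ) [ExpChar R p] : Type _ := R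

instance (R : Type*) [CommRing R] (p n : ℕ) [ExpChar R p] :
    AddCommGroup (FrobIter R p n) := inferInstanceAs (AddCommGroup R)

instance (R : Type*) [CommRing R] (p n : ℕ) [ExpChar R p] :
    Module R (FrobIter R p n) := Module.compHom R (iterateFrobenius R p n)

def FrobIter.val {R : Type*} [CommRing R] {p n : ℕ} [ExpChar R p] (x : FrobIter R p n) : R := x
def FrobIter.mk {R : Type*} [CommRing R] (p n : ℕ) [ExpChar R p] (x : R) : FrobIter R p n := x

section aux
variable {σ : Type*} {K : Type*} [CommRing K] (p m : ℕ) [ExpChar (MvPolynomial σ K) p]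

lemma frob_pow_expand (g : MvPolynomial σ K) :
    g ^ p ^ m = ∑ d ∈ g.support, monomial (p ^ m • d) (coeff d g ^ p ^ m) := by
  conv_lhs => rw [MvPolynomial.as_sum g]
  rw [show (∑ d ∈ g.support, (monomial d) (coeff d g)) ^ p ^ m
        = iterateFrobenius (MvPolynomial σ K) p m (∑ d ∈ g.support, (monomial d) (coeff d g)) from
      rfl, map_sum]
  exact Finset.sum_congr rfl fun d _ => by rw [iterateFrobenius_def, monomial_pow]

lemma frob_coeff_smul (hp : 0 < p) (g : MvPolynomial σ K) (d : σ →₀ ℕ) :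
    coeff (p ^ m • d) (g ^ p ^ m) = coeff d g ^ p ^ m := by
  classical
  have hq0 : 0 < p ^ m := pow_pos hp m
  rw [frob_pow_expand, coeff_sum]
  rw [Finset.sum_eq_single d]
  · rw [coeff_monomial, if_pos rfl]
  · intro d' _ hne
    rw [coeff_monomial, if_neg]
    intro h
    exact hne (Finsupp.ext fun i => by
      have := congrArg (fun f : σ →₀ ℕ => f i) h
      simp only [Finsupp.smul_apply, smul_eq_mul] at this
      exact Nat.eq_of_mul_eq_mul_left hq0 this)
  · intro hd
    rw [MvPolynomial.notMem_support_iff.mp hd, zero_pow hq0.ne']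
    simp [coeff_monomial]

lemma frob_coeff_ne (g : MvPolynomial σ K) (d : σ →₀ ℕ) (i : σ) (h : ¬ p ^ m ∣ d i) :
    coeff d (g ^ p ^ m) = 0 := by
  classical
  rw [frob_pow_expand, coeff_sum]
  apply Finset.sum_eq_zero
  intro d' _
  rw [coeff_monomial, if_neg]
  rintro rfl
  exact h ⟨d' i, by simp [Finsupp.smul_apply]⟩

end aux

theorem frob_free (L : Type*) [Field L] (p : ℕ) [Fact p.Prime] [CharP L p] (n m : ℕ) :
    Module.Free (MvPolynomial (Fin n) L) (FrobIter (MvPolynomial (Fin n) L) p m) := by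
  classical
  have hp : 0 < p := (Fact.out : p.Prime).pos
  have hq0 : 0 < p ^ m := pow_pos hp m
  set R := MvPolynomial (Fin n) L with hR
  set V := FrobIter L p m with hV
  set ι := Module.Free.ChooseBasisIndex L V with hι
  set b : Module.Basis ι L V := Module.Free.chooseBasis L V with hb
  set E := {e : Fin n →₀ ℕ // ∀ i, e i < p ^ m} with hE
  set v : E × ι → FrobIter R p m :=
    fun x => FrobIter.mk p m (monomial x.1.1 ((b x.2).val)) with hv
  have hsmulval : ∀ (r : R) (x : FrobIter R p m), (r • x).val = r ^ p ^ m * x.val :=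
    fun r x => rfl
  -- linear independence
  have hind : LinearIndependent R v := by
    rw [linearIndependent_iff']
    intro s g hsum x₀ hx₀
    ext d'
    rw [coeff_zero]
    -- pass to R and take coefficient at p^m • d' + x₀.1.1
    have hRsum : ∑ x ∈ s, (g x) ^ p ^ m * monomial x.1.1 ((b x.2).val) = (0 : R) := by
      calc ∑ x ∈ s, (g x) ^ p ^ m * monomial x.1.1 ((b x.2).val)
          = (∑ x ∈ s, g x • v x).val := rfl
        _ = 0 := by rw [hsum]; rfl
    have hco := congrArg (coeff (p ^ m • d' + x₀.1.1)) hRsum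
    rw [coeff_sum, coeff_zero] at hco
    -- evaluate each term
    have hterm : ∀ x ∈ s, coeff (p ^ m • d' + x₀.1.1) ((g x) ^ p ^ m * monomial x.1.1 ((b x.2).val))
        = if x.1 = x₀.1 then (coeff d' (g x)) ^ p ^ m * (b x.2).val else 0 := by
      intro x _
      rw [coeff_mul_monomial']
      by_cases hex : x.1 = x₀.1
      · rw [if_pos hex, if_pos, hex, add_tsub_cancel_right, frob_coeff_smul p m hp]
        rw [hex]; exact le_add_self
      · rw [if_neg hex]
        by_cases hle : x.1.1 ≤ p ^ m • d' + x₀.1.1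
        · rw [if_pos hle]
          obtain ⟨i, hi⟩ : ∃ i, x.1.1 i ≠ x₀.1.1 i := by
            by_contra hcon
            push_neg at hcon
            exact hex (Subtype.ext (Finsupp.ext hcon))
          rw [frob_coeff_ne p m _ _ i, zero_mul]
          have hle' : x.1.1 i ≤ p ^ m * d' i + x₀.1.1 i := by
            have := hle i
            simpa [Finsupp.smul_apply] using this
          rw [Finsupp.tsub_apply]
          simp only [Finsupp.add_apply, Finsupp.smul_apply, smul_eq_mul]
          rintro ⟨k, hk⟩
          have heq : p ^ m * d' i + x₀.1.1 i = p ^ m * k + x.1.1 i := by omega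
          have hmod := congrArg (· % p ^ m) heq
          simp only [Nat.add_comm (p ^ m * _), Nat.add_mul_mod_self_left] at hmod
          rw [Nat.mod_eq_of_lt (x₀.1.2 i), Nat.mod_eq_of_lt (x.1.2 i)] at hmod
          exact hi (hmod.symm)
        · rw [if_neg hle]
    rw [Finset.sum_congr rfl hterm, ← Finset.sum_filter] at hco
    -- reindex by second component
    set t := s.filter (fun x => x.1 = x₀.1) with ht
    have hinj : ∀ x ∈ t, ∀ y ∈ t, x.2 = y.2 → x = y := by
      intro x hx y hy hxy
      rw [Finset.mem_filter] at hx hy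
      exact Prod.ext (hx.2.trans hy.2.symm) hxy
    have himage : ∑ i ∈ t.image Prod.snd, (coeff d' (g (x₀.1, i))) ^ p ^ m * (b i).val
        = ∑ x ∈ t, (coeff d' (g x)) ^ p ^ m * (b x.2).val := by
      rw [Finset.sum_image hinj]
      refine Finset.sum_congr rfl fun x hx => ?_
      rw [Finset.mem_filter] at hx
      have : (x₀.1, x.2) = x := Prod.ext hx.2.symm rfl
      rw [this]
    rw [← himage] at hco
    -- interpret in V
    have hVsum : (∑ i ∈ t.image Prod.snd, coeff d' (g (x₀.1, i)) • b i : V) = 0 := by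
      have : (∑ i ∈ t.image Prod.snd, coeff d' (g (x₀.1, i)) • b i : V).val
          = ∑ i ∈ t.image Prod.snd, (coeff d' (g (x₀.1, i))) ^ p ^ m * (b i).val := rfl
      have h0 : (∑ i ∈ t.image Prod.snd, coeff d' (g (x₀.1, i)) • b i : V).val = 0 :=
        this.trans hco
      exact h0
    have hmem : x₀.2 ∈ t.image Prod.snd := by
      refine Finset.mem_image.mpr ⟨x₀, ?_, rfl⟩
      rw [Finset.mem_filter]; exact ⟨hx₀, rfl⟩
    have := linearIndependent_iff'.mp b.linearIndependent (t.image Prod.snd)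
      (fun i => coeff d' (g (x₀.1, i))) hVsum x₀.2 hmem
    simpa using this
  -- spanning
  have hspan : ⊤ ≤ Submodule.span R (Set.range v) := by
    intro x _
    have hx : x = ∑ d ∈ x.val.support, FrobIter.mk p m (monomial d (coeff d x.val)) :=
      MvPolynomial.as_sum x.val
    rw [hx]
    refine Submodule.sum_mem _ fun d _ => ?_
    -- decompose the exponent
    set dq : Fin n →₀ ℕ := d.mapRange (· / p ^ m) (Nat.zero_div _) with hdq
    set dr : Fin n →₀ ℕ := d.mapRange (· % p ^ m) (Nat.zero_mod _) with hdr
    have hdrE : ∀ i, dr i < p ^ m := fun i => by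
      simp only [hdr, Finsupp.mapRange_apply]
      exact Nat.mod_lt _ hq0
    have hd : d = p ^ m • dq + dr := Finsupp.ext fun i => by
      simp only [Finsupp.add_apply, Finsupp.smul_apply, smul_eq_mul, hdq, hdr,
        Finsupp.mapRange_apply]
      exact (Nat.div_add_mod (d i) (p ^ m)).symm
    -- decompose the coefficient using the basis of V
    set c : V := FrobIter.mk p m (coeff d x.val) with hc
    have hcrepr : c = (b.repr c).sum fun i a => a • b i := by
      conv_lhs => rw [← b.linearCombination_repr c]
      rw [Finsupp.linearCombination_apply]
    have hcoeff : coeff d x.val = (b.repr c).sum fun i a => a ^ p ^ m * (b i).val := by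
      calc coeff d x.val = c.val := rfl
        _ = ((b.repr c).sum fun i a => a • b i).val := by rw [← hcrepr]
        _ = (b.repr c).sum fun i a => a ^ p ^ m * (b i).val := rfl
    have hmon : FrobIter.mk p m (monomial d (coeff d x.val))
        = (b.repr c).sum fun i a => FrobIter.mk p m (monomial d (a ^ p ^ m * (b i).val)) := by
      show monomial d (coeff d x.val) = (b.repr c).sum fun i a => monomial d (a ^ p ^ m * (b i).val)
      rw [hcoeff]
      exact map_finsuppSum (monomial d : L →ₗ[L] R) _ _
    rw [hmon]
    refine Submodule.sum_mem _ fun i _ => ?_; beta_reduce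
    have hkey : FrobIter.mk p m (monomial d ((b.repr c) i ^ p ^ m * (b i).val))
        = ((monomial dq ((b.repr c) i) : R)) • v (⟨dr, hdrE⟩, i) := by
      show monomial d ((b.repr c) i ^ p ^ m * (b i).val)
        = (monomial dq ((b.repr c) i) : R) ^ p ^ m * monomial dr ((b i).val)
      rw [monomial_pow, monomial_mul, ← hd]
    rw [hkey]
    exact Submodule.smul_mem _ _ (Submodule.subset_span ⟨(⟨dr, hdrE⟩, i), rfl⟩)
  exact Module.Free.of_basis (Module.Basis.mk hind hspan)

/-- Over the polynomial ring `R = L[y₁, …, yₙ]` in `n` variables over a field `L` of prime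
characteristic `p`, for every `m > 0` the ring `R` is flat as an `R`-module via restriction
of scalars along the `m`-fold composite of the Frobenius endomorphism `a ↦ a ^ p`. -/
theorem polynomialRing_flat_iterateFrobenius
    (L : Type*) [Field L] (p : ℕ) [Fact p.Prime] [CharP L p] (n : ℕ) :
    ∀ m : ℕ, 0 < m → Module.Flat (MvPolynomial (Fin n) L) (FrobIter (MvPolynomial (Fin n) L) p m) := by
  intro m _
  haveI := frob_free L p n m
  exact Module.Flat.of_free
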